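/- Under the same uniform asymptotic hypothesis f_n(x) = c(x) n^{−5/2} ρ(x)^n (1 + O(1/n)), the variance V(X_n) = f_n''(0)/f_n(0) + f_n'(0)/f_n(0) − (f_n'(0)/f_n(0))² satisfies V(X_n) ∼ n · (ρ''(0)ρ(0) + ρ'(0)ρ(0) − ρ'(0)²)/ρ(0)² as n → ∞, provided ρ''(0)ρ(0) + ρ'(0)ρ(0) − ρ'(0)² > 0. -/

import Mathlib

open Filter

open Metric

lemma cderiv1 {h : ℂ → ℂ} {z : ℂ} {R C : ℝ} (hR : 0 < R)
    (hd : DifferentiableOn ℂ h (closedBall z R))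
    (hC : ∀ w ∈ sphere z R, ‖h w‖ ≤ C) : ‖deriv h z‖ ≤ C / R := by
  refine Complex.norm_deriv_le_of_forall_mem_sphere_norm_le hR ⟨hd.mono ball_subset_closedBall, ?_⟩ hC
  rw [closure_ball z hR.ne']
  exact hd.continuousOn

lemma analyticAt_deriv' {h : ℂ → ℂ} {z : ℂ} (hz : AnalyticAt ℂ h z) :
    AnalyticAt ℂ (deriv h) z := by
  obtain ⟨s, hs, hsub⟩ := hz.eventually_analyticAt.exists_mem
  exact AnalyticOnNhd.deriv (fun w hw => hsub w hw) z (mem_of_mem_nhds hs)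

lemma cderiv2 {h : ℂ → ℂ} {z : ℂ} {R C : ℝ} (hR : 0 < R)
    (hd : ∀ w ∈ closedBall z (2*R), AnalyticAt ℂ h w)
    (hC : ∀ w ∈ closedBall z (2*R), ‖h w‖ ≤ C) : ‖deriv (deriv h) z‖ ≤ C / R / R := by
  have hsub : closedBall z R ⊆ closedBall z (2*R) :=
    closedBall_subset_closedBall (by linarith)
  refine cderiv1 hR (fun w hw => ?_) (fun w hw => ?_)
  · exact (analyticAt_deriv' (hd w (hsub hw))).differentiableAt.differentiableWithinAt
  · have hw2 : ∀ y ∈ closedBall w R, y ∈ closedBall z (2*R) := by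
      intro y hy
      rw [mem_closedBall] at hy ⊢
      have hwz : dist w z = R := hw
      calc dist y z ≤ dist y w + dist w z := dist_triangle _ _ _
        _ ≤ R + R := by rw [hwz]; linarith
        _ = 2*R := by ring
    refine cderiv1 hR (fun y hy => ?_) (fun y hy => ?_)
    · exact (hd y (hw2 y hy)).differentiableAt.differentiableWithinAt
    · exact hC y (hw2 y (sphere_subset_closedBall hy))


lemma algId (c0 c1 c2 r0 r1 r2 g0 g1 g2 A P m : ℂ)
    (hc0 : c0 ≠ 0) (hr0 : r0 ≠ 0) (hA : A ≠ 0) (hg0 : g0 ≠ 0) (hP : P ≠ 0) :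
    ((((c2 * A * (P * r0 ^ 2) + c1 * A * (m * (P * r0) * r1)) +
        (c1 * A * (m * (P * r0) * r1)
          + c0 * A * ((m * ((m - 1) * P * r1)) * r1 + (m * (P * r0)) * r2)))
          * g0 + (c1 * A * (P * r0 ^ 2) + c0 * A * (m * (P * r0) * r1)) * g1) +
      ((c1 * A * (P * r0 ^ 2) + c0 * A * (m * (P * r0) * r1)) * g1 + c0 * A * (P * r0 ^ 2) * g2))
        / (c0 * A * (P * r0 ^ 2) * g0)
      + ((c1 * A * (P * r0 ^ 2) + c0 * A * (m * (P * r0) * r1)) * g0 + c0 * A * (P * r0 ^ 2) * g1)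
        / (c0 * A * (P * r0 ^ 2) * g0)
      - (((c1 * A * (P * r0 ^ 2) + c0 * A * (m * (P * r0) * r1)) * g0 + c0 * A * (P * r0 ^ 2) * g1)
        / (c0 * A * (P * r0 ^ 2) * g0)) ^ 2
    = m * ((r2 * r0 + r1 * r0 - r1 ^ 2) / r0 ^ 2)
      + ((c2 * c0 + c1 * c0 - c1 ^ 2) / c0 ^ 2 + (g2 * g0 + g1 * g0 - g1 ^ 2) / g0 ^ 2) := by
  have hDne : c0 * A * (P * r0 ^ 2) * g0 ≠ 0 :=
    mul_ne_zero (mul_ne_zero (mul_ne_zero hc0 hA)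
      (mul_ne_zero hP (pow_ne_zero _ hr0))) hg0
  set D := c0 * A * (P * r0 ^ 2) * g0 with hDdef
  set X := (((c2 * A * (P * r0 ^ 2) + c1 * A * (m * (P * r0) * r1)) +
        (c1 * A * (m * (P * r0) * r1)
          + c0 * A * ((m * ((m - 1) * P * r1)) * r1 + (m * (P * r0)) * r2)))
          * g0 + (c1 * A * (P * r0 ^ 2) + c0 * A * (m * (P * r0) * r1)) * g1) +
      ((c1 * A * (P * r0 ^ 2) + c0 * A * (m * (P * r0) * r1)) * g1 + c0 * A * (P * r0 ^ 2) * g2)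
    with hXdef
  set Y := (c1 * A * (P * r0 ^ 2) + c0 * A * (m * (P * r0) * r1)) * g0 + c0 * A * (P * r0 ^ 2) * g1
    with hYdef
  have h1 : X / D + Y / D - (Y / D) ^ 2 = (X * D + Y * D - Y ^ 2) / D ^ 2 := by
    field_simp
  rw [h1, div_eq_iff (pow_ne_zero 2 hDne)]
  rw [hXdef, hYdef, hDdef]
  field_simp
  ring


/-- Under the uniform asymptotics `f_n(x) = c(x) n^{−5/2} ρ(x)^n (1 + O(1/n))`, the
variance `V(X_n) = f_n''(0)/f_n(0) + f_n'(0)/f_n(0) − (f_n'(0)/f_n(0))²` satisfies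
`V(X_n) ∼ n (ρ''(0)ρ(0) + ρ'(0)ρ(0) − ρ'(0)²)/ρ(0)²`, provided this constant is positive. -/
theorem stmt8 (f : ℕ → ℂ → ℂ) (c ρ : ℂ → ℂ) (U : Set ℂ) (hU : U ∈ nhds (0 : ℂ))
    (hf : ∀ n, AnalyticOnNhd ℂ (f n) U)
    (hc : AnalyticAt ℂ c 0) (hρ : AnalyticAt ℂ ρ 0)
    (hc0im : (c 0).im = 0) (hc0 : 0 < (c 0).re)
    (hρ0im : (ρ 0).im = 0) (hρ0 : 0 < (ρ 0).re)
    (hρ1im : (deriv ρ 0).im = 0) (hρ1 : 0 < (deriv ρ 0).re)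
    (hasym : ∃ C : ℝ, ∀ᶠ n : ℕ in atTop, ∀ x ∈ U,
      ‖f n x - c x * ((n : ℂ) ^ (-(5 : ℂ)/2)) * (ρ x) ^ n‖
        ≤ (C / n) * ‖c x * ((n : ℂ) ^ (-(5 : ℂ)/2)) * (ρ x) ^ n‖)
    (hKim : ((iteratedDeriv 2 ρ 0 * ρ 0 + deriv ρ 0 * ρ 0 - (deriv ρ 0) ^ 2) / (ρ 0) ^ 2).im = 0)
    (hKpos : 0 < ((iteratedDeriv 2 ρ 0 * ρ 0 + deriv ρ 0 * ρ 0 - (deriv ρ 0) ^ 2) / (ρ 0) ^ 2).re) :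
    Tendsto (fun n : ℕ =>
        (iteratedDeriv 2 (f n) 0 / f n 0 + deriv (f n) 0 / f n 0
            - (deriv (f n) 0 / f n 0) ^ 2)
          / ((n : ℂ) *
            ((iteratedDeriv 2 ρ 0 * ρ 0 + deriv ρ 0 * ρ 0 - (deriv ρ 0) ^ 2) / (ρ 0) ^ 2)))
      atTop (nhds 1) := by
  obtain ⟨C, hCas⟩ := hasym
  have hc0' : c 0 ≠ 0 := fun h => by rw [h] at hc0; simp at hc0
  have hρ0' : ρ 0 ≠ 0 := fun h => by rw [h] at hρ0; simp at hρ0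
  set K : ℂ := (iteratedDeriv 2 ρ 0 * ρ 0 + deriv ρ 0 * ρ 0 - (deriv ρ 0) ^ 2) / (ρ 0) ^ 2
    with hKdef
  have hK0 : K ≠ 0 := fun h => by rw [h] at hKpos; simp at hKpos
  -- a closed ball on which everything is nice
  have hW : ∀ᶠ z in nhds (0:ℂ), z ∈ U ∧ AnalyticAt ℂ c z ∧ AnalyticAt ℂ ρ z ∧ c z ≠ 0 ∧ ρ z ≠ 0 := by
    filter_upwards [hU, hc.eventually_analyticAt, hρ.eventually_analyticAt,
      hc.continuousAt.eventually_ne hc0', hρ.continuousAt.eventually_ne hρ0'] with z h1 h2 h3 h4 h5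
    exact ⟨h1, h2, h3, h4, h5⟩
  obtain ⟨ε, hε, hballW⟩ := Metric.eventually_nhds_iff.1 hW
  set r : ℝ := ε/4 with hrdef
  have hr : 0 < r := by positivity
  have hWb : ∀ z ∈ closedBall (0:ℂ) (2*r),
      z ∈ U ∧ AnalyticAt ℂ c z ∧ AnalyticAt ℂ ρ z ∧ c z ≠ 0 ∧ ρ z ≠ 0 := by
    intro z hz
    refine hballW ?_
    rw [mem_closedBall] at hz
    have : 2*r = ε/2 := by rw [hrdef]; ring
    linarith
  have h0mem : (0:ℂ) ∈ closedBall (0:ℂ) (2*r) := mem_closedBall_self (by positivity)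
  -- the normalized functions
  set G : ℕ → ℂ → ℂ := fun n x => f n x / (c x * ((n : ℂ) ^ (-(5 : ℂ)/2)) * ρ x ^ n) with hGdef
  have hAne : ∀ n : ℕ, 1 ≤ n → ((n:ℂ) ^ (-(5:ℂ)/2)) ≠ 0 := by
    intro n hn
    have hn0 : (n:ℂ) ≠ 0 := Nat.cast_ne_zero.2 (by omega)
    rw [Complex.cpow_def_of_ne_zero hn0]
    exact Complex.exp_ne_zero _
  have hdne : ∀ n : ℕ, 1 ≤ n → ∀ z ∈ closedBall (0:ℂ) (2*r),
      c z * ((n:ℂ) ^ (-(5:ℂ)/2)) * ρ z ^ n ≠ 0 := by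
    intro n hn z hz
    exact mul_ne_zero (mul_ne_zero (hWb z hz).2.2.2.1 (hAne n hn))
      (pow_ne_zero _ (hWb z hz).2.2.2.2)
  have hgan : ∀ n : ℕ, 1 ≤ n → ∀ z ∈ closedBall (0:ℂ) (2*r), AnalyticAt ℂ (G n) z := by
    intro n hn z hz
    exact (hf n z (hWb z hz).1).div
      (((hWb z hz).2.1.mul analyticAt_const).mul ((hWb z hz).2.2.1.pow n)) (hdne n hn z hz)
  -- uniform bound on G - 1
  have hgbnd : ∀ᶠ n : ℕ in atTop, ∀ z ∈ closedBall (0:ℂ) (2*r), ‖G n z - 1‖ ≤ C / n := by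
    filter_upwards [hCas, eventually_ge_atTop 1] with n hn h1 z hz
    have hd := hdne n h1 z hz
    have hb := hn z (hWb z hz).1
    have : G n z - 1 = (f n z - c z * ((n:ℂ) ^ (-(5:ℂ)/2)) * ρ z ^ n)
        / (c z * ((n:ℂ) ^ (-(5:ℂ)/2)) * ρ z ^ n) := by
      rw [hGdef]
      exact div_sub_one hd
    rw [this, norm_div, div_le_iff₀ (norm_pos_iff.2 hd)]
    exact hb
  -- limits of G and its derivatives at 0
  have hg0 : Tendsto (fun n => G n 0) atTop (nhds 1) := by
    have h : Tendsto (fun n => G n 0 - 1) atTop (nhds 0) := by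
      refine squeeze_zero_norm' ?_ (tendsto_const_div_atTop_nhds_zero_nat C)
      filter_upwards [hgbnd] with n hn
      exact hn 0 h0mem
    have := h.add (tendsto_const_nhds (x := (1:ℂ)))
    simpa using this
  have hsph : ∀ w : ℂ, w ∈ sphere (0:ℂ) r → w ∈ closedBall (0:ℂ) (2*r) := by
    intro w hw
    rw [mem_sphere] at hw
    rw [mem_closedBall, hw]
    linarith
  have hcbsub : closedBall (0:ℂ) r ⊆ closedBall (0:ℂ) (2*r) :=
    closedBall_subset_closedBall (by linarith)
  have hg1 : Tendsto (fun n => deriv (G n) 0) atTop (nhds 0) := by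
    refine squeeze_zero_norm' (a := fun n : ℕ => C / n / r) ?_ ?_
    · filter_upwards [hgbnd, eventually_ge_atTop 1] with n hbnd h1
      have hdiff : DifferentiableOn ℂ (fun x => G n x - 1) (closedBall (0:ℂ) r) := by
        intro w hw
        exact ((hgan n h1 w (hcbsub hw)).sub analyticAt_const).differentiableAt.differentiableWithinAt
      have := cderiv1 hr hdiff (fun w hw => hbnd w (hsph w hw))
      rwa [deriv_sub_const] at this
    · have := (tendsto_const_div_atTop_nhds_zero_nat C).div_const r
      simpa using this
  have hg2 : Tendsto (fun n => deriv (deriv (G n)) 0) atTop (nhds 0) := by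
    refine squeeze_zero_norm' (a := fun n : ℕ => C / n / r / r) ?_ ?_
    · filter_upwards [hgbnd, eventually_ge_atTop 1] with n hbnd h1
      have han : ∀ w ∈ closedBall (0:ℂ) (2*r), AnalyticAt ℂ (fun x => G n x - 1) w :=
        fun w hw => (hgan n h1 w hw).sub analyticAt_const
      have := cderiv2 hr han hbnd
      rwa [show deriv (fun x => G n x - 1) = deriv (G n) from funext fun x => deriv_sub_const 1]
        at this
    · have := ((tendsto_const_div_atTop_nhds_zero_nat C).div_const r).div_const r
      simpa using this
  have hg0ne : ∀ᶠ n : ℕ in atTop, G n 0 ≠ 0 := hg0.eventually_ne one_ne_zero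
  set E : ℕ → ℂ := fun n => (deriv (deriv (G n)) 0 * G n 0 + deriv (G n) 0 * G n 0
      - (deriv (G n) 0) ^ 2) / (G n 0) ^ 2 with hEdef
  set B : ℂ := (iteratedDeriv 2 c 0 * c 0 + deriv c 0 * c 0 - (deriv c 0) ^ 2) / (c 0) ^ 2
    with hBdef
  have hE : Tendsto E atTop (nhds 0) := by
    have hnum : Tendsto (fun n => deriv (deriv (G n)) 0 * G n 0 + deriv (G n) 0 * G n 0
        - (deriv (G n) 0) ^ 2) atTop (nhds 0) := by
      have := ((hg2.mul hg0).add (hg1.mul hg0)).sub (hg1.pow 2)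
      simpa using this
    have hden : Tendsto (fun n => (G n 0) ^ 2) atTop (nhds 1) := by
      simpa using hg0.pow 2
    have := hnum.div hden one_ne_zero
    rw [zero_div] at this
    exact this
  -- key identity
  have hkey : ∀ᶠ n : ℕ in atTop,
      iteratedDeriv 2 (f n) 0 / f n 0 + deriv (f n) 0 / f n 0
        - (deriv (f n) 0 / f n 0) ^ 2 = (n:ℂ) * K + (B + E n) := by
    filter_upwards [eventually_ge_atTop 2, hg0ne] with n hn2 hg0n
    have h1n : 1 ≤ n := by omega
    obtain ⟨A, hA⟩ : ∃ A : ℂ, ((n:ℂ) ^ (-(5:ℂ)/2)) = A := ⟨_, rfl⟩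
    have hAn : A ≠ 0 := by rw [← hA]; exact hAne n h1n
    have hGz : ∀ z : ℂ, G n z = f n z / (c z * A * ρ z ^ n) := by
      intro z
      simp only [hGdef]
      rw [hA]
    have hdneA : ∀ z ∈ ball (0:ℂ) (2*r), c z * A * ρ z ^ n ≠ 0 := by
      intro z hz
      rw [← hA]
      exact hdne n h1n z (ball_subset_closedBall hz)
    have hS0' : (0:ℂ) ∈ ball (0:ℂ) (2*r) := mem_ball_self (by positivity)
    have hfd : ∀ z ∈ ball (0:ℂ) (2*r), f n z = c z * A * ρ z ^ n * G n z := by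
      intro z hz
      rw [hGz z, mul_comm]
      exact (div_mul_cancel₀ (f n z) (hdneA z hz)).symm
    have hanz : ∀ z ∈ ball (0:ℂ) (2*r), AnalyticAt ℂ (G n) z :=
      fun z hz => hgan n h1n z (ball_subset_closedBall hz)
    have hD1fun : ∀ z ∈ ball (0:ℂ) (2*r), HasDerivAt (f n)
        ((deriv c z * A * ρ z ^ n + c z * A * ((n:ℂ) * ρ z ^ (n-1) * deriv ρ z)) * G n z
          + c z * A * ρ z ^ n * deriv (G n) z) z := by
      intro z hz
      have hca : HasDerivAt c (deriv c z) z :=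
        ((hWb z (ball_subset_closedBall hz)).2.1).differentiableAt.hasDerivAt
      have hρa : HasDerivAt ρ (deriv ρ z) z :=
        ((hWb z (ball_subset_closedBall hz)).2.2.1).differentiableAt.hasDerivAt
      have hga : HasDerivAt (G n) (deriv (G n) z) z := (hanz z hz).differentiableAt.hasDerivAt
      have hpow : HasDerivAt (fun x => ρ x ^ n) ((n:ℂ) * ρ z ^ (n-1) * deriv ρ z) z := hρa.pow n
      have hprod := ((hca.mul_const A).mul hpow).mul hga
      exact hprod.congr_of_eventuallyEq
        (eventuallyEq_of_mem (isOpen_ball.mem_nhds hz) (fun w hw => hfd w hw))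
    have hderiv_on : ∀ z ∈ ball (0:ℂ) (2*r), deriv (f n) z =
        (deriv c z * A * ρ z ^ n + c z * A * ((n:ℂ) * ρ z ^ (n-1) * deriv ρ z)) * G n z
          + c z * A * ρ z ^ n * deriv (G n) z := fun z hz => (hD1fun z hz).deriv
    have hD1 : deriv (f n) 0 =
        (deriv c 0 * A * ρ 0 ^ n + c 0 * A * ((n:ℂ) * ρ 0 ^ (n-1) * deriv ρ 0)) * G n 0
          + c 0 * A * ρ 0 ^ n * deriv (G n) 0 := hderiv_on 0 hS0'
    -- second derivative
    have hca0 : HasDerivAt c (deriv c 0) 0 := hc.differentiableAt.hasDerivAt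
    have hdc0 : HasDerivAt (deriv c) (deriv (deriv c) 0) 0 :=
      (analyticAt_deriv' hc).differentiableAt.hasDerivAt
    have hρa0 : HasDerivAt ρ (deriv ρ 0) 0 := hρ.differentiableAt.hasDerivAt
    have hdρ0 : HasDerivAt (deriv ρ) (deriv (deriv ρ) 0) 0 :=
      (analyticAt_deriv' hρ).differentiableAt.hasDerivAt
    have hga0 : HasDerivAt (G n) (deriv (G n) 0) 0 := (hanz 0 hS0').differentiableAt.hasDerivAt
    have hdg0 : HasDerivAt (deriv (G n)) (deriv (deriv (G n)) 0) 0 :=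
      (analyticAt_deriv' (hanz 0 hS0')).differentiableAt.hasDerivAt
    have hpow0 : HasDerivAt (fun x => ρ x ^ n) ((n:ℂ) * ρ 0 ^ (n-1) * deriv ρ 0) 0 := hρa0.pow n
    have hpow1 : HasDerivAt (fun x => ρ x ^ (n-1))
        (((n-1:ℕ):ℂ) * ρ 0 ^ (n-1-1) * deriv ρ 0) 0 := hρa0.pow (n-1)
    have hT2inner : HasDerivAt (fun z => (n:ℂ) * ρ z ^ (n-1) * deriv ρ z)
        ((n:ℂ) * (((n-1:ℕ):ℂ) * ρ 0 ^ (n-1-1) * deriv ρ 0) * deriv ρ 0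
          + (n:ℂ) * ρ 0 ^ (n-1) * deriv (deriv ρ) 0) 0 :=
      (hpow1.const_mul ((n:ℂ))).mul hdρ0
    have hsum : HasDerivAt
        (fun z => deriv c z * A * ρ z ^ n + c z * A * ((n:ℂ) * ρ z ^ (n-1) * deriv ρ z))
        ((deriv (deriv c) 0 * A * ρ 0 ^ n + deriv c 0 * A * ((n:ℂ) * ρ 0 ^ (n-1) * deriv ρ 0))
          + (deriv c 0 * A * ((n:ℂ) * ρ 0 ^ (n-1) * deriv ρ 0)
            + c 0 * A * ((n:ℂ) * (((n-1:ℕ):ℂ) * ρ 0 ^ (n-1-1) * deriv ρ 0) * deriv ρ 0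
              + (n:ℂ) * ρ 0 ^ (n-1) * deriv (deriv ρ) 0))) 0 :=
      ((hdc0.mul_const A).mul hpow0).add ((hca0.mul_const A).mul hT2inner)
    have hT1 := hsum.mul hga0
    have hT2 := ((hca0.mul_const A).mul hpow0).mul hdg0
    have htot := hT1.add hT2
    have heq : deriv (f n) =ᶠ[nhds 0]
        (fun z => (deriv c z * A * ρ z ^ n + c z * A * ((n:ℂ) * ρ z ^ (n-1) * deriv ρ z)) * G n z
          + c z * A * ρ z ^ n * deriv (G n) z) :=
      eventuallyEq_of_mem (isOpen_ball.mem_nhds hS0') hderiv_on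
    have hD2 : deriv (deriv (f n)) 0 =
        (((deriv (deriv c) 0 * A * ρ 0 ^ n + deriv c 0 * A * ((n:ℂ) * ρ 0 ^ (n-1) * deriv ρ 0))
          + (deriv c 0 * A * ((n:ℂ) * ρ 0 ^ (n-1) * deriv ρ 0)
            + c 0 * A * ((n:ℂ) * (((n-1:ℕ):ℂ) * ρ 0 ^ (n-1-1) * deriv ρ 0) * deriv ρ 0
              + (n:ℂ) * ρ 0 ^ (n-1) * deriv (deriv ρ) 0))) * G n 0
          + (deriv c 0 * A * ρ 0 ^ n + c 0 * A * ((n:ℂ) * ρ 0 ^ (n-1) * deriv ρ 0))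
            * deriv (G n) 0)
        + ((deriv c 0 * A * ρ 0 ^ n + c 0 * A * ((n:ℂ) * ρ 0 ^ (n-1) * deriv ρ 0))
            * deriv (G n) 0
          + c 0 * A * ρ 0 ^ n * deriv (deriv (G n)) 0) :=
      heq.deriv_eq.trans htot.deriv
    have hF0 : f n 0 = c 0 * A * ρ 0 ^ n * G n 0 := hfd 0 hS0'
    have h2d : ∀ u : ℂ → ℂ, iteratedDeriv 2 u 0 = deriv (deriv u) 0 := by
      intro u
      rw [iteratedDeriv_succ, iteratedDeriv_one]
    have e3 : n - 1 - 1 = n - 2 := by omega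
    have e4 : ((n-1:ℕ):ℂ) = (n:ℂ) - 1 := by
      rw [Nat.cast_sub (by omega : 1 ≤ n)]
      simp
    have e1 : ρ 0 ^ n = ρ 0 ^ (n-2) * ρ 0 ^ 2 := by
      rw [← pow_add]
      congr 1
      omega
    have e2 : ρ 0 ^ (n-1) = ρ 0 ^ (n-2) * ρ 0 := by
      rw [← pow_succ]
      congr 1
      omega
    have hp : ρ 0 ^ (n-2) ≠ 0 := pow_ne_zero _ hρ0'
    simp only [hKdef, hBdef, hEdef]
    rw [h2d (f n), h2d c, h2d ρ, hD2, hD1, hF0, e3, e4, e1, e2]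
    exact algId (c 0) (deriv c 0) (deriv (deriv c) 0) (ρ 0) (deriv ρ 0) (deriv (deriv ρ) 0)
      (G n 0) (deriv (G n) 0) (deriv (deriv (G n)) 0) A (ρ 0 ^ (n-2)) (n:ℂ)
      hc0' hρ0' hAn hg0n hp
  -- final limit
  have hfinal : ∀ᶠ n : ℕ in atTop,
      (iteratedDeriv 2 (f n) 0 / f n 0 + deriv (f n) 0 / f n 0
        - (deriv (f n) 0 / f n 0) ^ 2) / ((n:ℂ) * K)
      = 1 + (B + E n) * ((n:ℂ) * K)⁻¹ := by
    filter_upwards [hkey, eventually_ge_atTop 1] with n hk h1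
    have hnK : (n:ℂ) * K ≠ 0 := mul_ne_zero (Nat.cast_ne_zero.2 (by omega)) hK0
    rw [hk, add_div, div_self hnK, div_eq_mul_inv]
  have hni : Tendsto (fun n : ℕ => ((n:ℂ))⁻¹) atTop (nhds 0) := by
    rw [tendsto_zero_iff_norm_tendsto_zero]
    have h1 := tendsto_const_div_atTop_nhds_zero_nat (1:ℝ)
    simp only [one_div] at h1
    simpa [norm_inv] using h1
  have hinv : Tendsto (fun n : ℕ => ((n:ℂ) * K)⁻¹) atTop (nhds 0) := by
    have := hni.mul_const K⁻¹
    simp only [zero_mul] at this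
    refine this.congr fun n => ?_
    rw [mul_inv]
  have hBE : Tendsto (fun n => B + E n) atTop (nhds B) := by
    simpa using tendsto_const_nhds.add hE
  have hlim : Tendsto (fun n : ℕ => 1 + (B + E n) * ((n:ℂ) * K)⁻¹) atTop (nhds 1) := by
    have := Tendsto.const_add (1:ℂ) (hBE.mul hinv)
    simpa using this
  exact hlim.congr' (hfinal.mono fun n h => h.symm)
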